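/- Let A(x) be a d×d positive semidefinite symmetric matrix and let F(x,X) := −Tr(A(x)X). If Z ∈ ℝ^d is a generalized subunit vector for F at x, then there exists r > 0 such that rZ is subunit for A(x) in the sense of Fefferman–Phong, i.e. A(x) ≥ (rZ) ⊗ (rZ). -/

import Mathlib

open Set Metric Filter Topology

noncomputable section

/-- Euclidean space `ℝ^d`. -/
abbrev EV (d : ℕ) := EuclideanSpace ℝ (Fin d)

/-- The outer product `p ⊗ p` as a `d × d` matrix. -/
def outer {d : ℕ} (p : EV d) : Matrix (Fin d) (Fin d) ℝ := Matrix.of fun i j => p i * p j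

/-- Euclidean dot product. -/
def dotp {d : ℕ} (p q : EV d) : ℝ := ∑ i, p i * q i

/-- Euclidean gradient. -/
def grad {d : ℕ} (φ : EV d → ℝ) (x : EV d) : EV d :=
  (EuclideanSpace.equiv (Fin d) ℝ).symm fun i => fderiv ℝ φ x (EuclideanSpace.single i 1)

/-- Euclidean Hessian matrix. -/
def hess {d : ℕ} (φ : EV d → ℝ) (x : EV d) : Matrix (Fin d) (Fin d) ℝ :=
  Matrix.of fun i j =>
    fderiv ℝ (fun y => fderiv ℝ φ y (EuclideanSpace.single j 1)) x (EuclideanSpace.single i 1)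

/-- `F` is proper: nondecreasing in `r`, nonincreasing in the matrix argument
(w.r.t. the positive semidefinite order `Y ≤ X ↔ (X - Y).PosSemidef`). -/
def IsProper {d m : ℕ} (Ω : Set (EV d))
    (F : EV d → ℝ → EV m → Matrix (Fin m) (Fin m) ℝ → ℝ) : Prop :=
  ∀ x ∈ Ω, ∀ r s : ℝ, ∀ p : EV m, ∀ X Y : Matrix (Fin m) (Fin m) ℝ,
    r ≤ s → (X - Y).PosSemidef → F x r p X ≤ F x s p Y

/-- Lower semicontinuity of the operator `F`, jointly in all its arguments. -/
def IsLscOperator {d m : ℕ} (Ω : Set (EV d))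
    (F : EV d → ℝ → EV m → Matrix (Fin m) (Fin m) ℝ → ℝ) : Prop :=
  LowerSemicontinuousOn
    (fun q : EV d × ℝ × EV m × Matrix (Fin m) (Fin m) ℝ => F q.1 q.2.1 q.2.2.1 q.2.2.2)
    {q | q.1 ∈ Ω ∧ q.2.2.1 ≠ 0 ∧ q.2.2.2.IsSymm}

/-- Condition (ii) (scaling): for some `φ : (0,1] → (0,∞)`,
`F(x, ξs, ξp, ξX) ≥ φ(ξ) F(x,s,p,X)` for all `ξ ∈ (0,1]`, `s ∈ [-1,0]`. -/
def HasScaling {d m : ℕ} (Ω : Set (EV d))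
    (F : EV d → ℝ → EV m → Matrix (Fin m) (Fin m) ℝ → ℝ) : Prop :=
  ∃ φ : ℝ → ℝ, (∀ ξ ∈ Ioc (0:ℝ) 1, 0 < φ ξ) ∧
    ∀ ξ ∈ Ioc (0:ℝ) 1, ∀ s ∈ Icc (-1:ℝ) 0, ∀ x ∈ Ω, ∀ p : EV m, p ≠ 0 →
      ∀ X : Matrix (Fin m) (Fin m) ℝ, X.IsSymm →
        φ ξ * F x s p X ≤ F x (ξ * s) (ξ • p) (ξ • X)

/-- Ellipticity condition (elli) for a subelliptic operator `G`. -/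
def IsElliptic {d m : ℕ} (Ω : Set (EV d))
    (G : EV d → ℝ → EV m → Matrix (Fin m) (Fin m) ℝ → ℝ) : Prop :=
  ∀ x ∈ Ω, ∀ q : EV m, q ≠ 0 → ∀ X : Matrix (Fin m) (Fin m) ℝ, X.IsSymm →
    ∃ γ : ℝ, 0 < γ ∧ 0 < G x 0 q (X - γ • outer q)

/-- `Z` is a generalized subunit vector for `F` at `x`:
`sup_{γ>0} F(x,0,p, I - γ p⊗p) > 0` whenever `Z·p ≠ 0`. -/
def IsSubunitAt {d : ℕ} (F : EV d → ℝ → EV d → Matrix (Fin d) (Fin d) ℝ → ℝ)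
    (x : EV d) (Z : EV d) : Prop :=
  ∀ p : EV d, dotp Z p ≠ 0 → ∃ γ : ℝ, 0 < γ ∧ 0 < F x 0 p (1 - γ • outer p)

/-- Viscosity subsolution (test functions with nonvanishing gradient). -/
def IsViscSubsol {d : ℕ} (Ω : Set (EV d))
    (F : EV d → ℝ → EV d → Matrix (Fin d) (Fin d) ℝ → ℝ) (u : EV d → ℝ) : Prop :=
  ∀ φ : EV d → ℝ, ContDiff ℝ 2 φ → ∀ x ∈ Ω,
    IsLocalMaxOn (fun y => u y - φ y) Ω x → grad φ x ≠ 0 →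
      F x (u x) (grad φ x) (hess φ x) ≤ 0

/-- Viscosity supersolution (test functions with nonvanishing gradient). -/
def IsViscSupersol {d : ℕ} (Ω : Set (EV d))
    (F : EV d → ℝ → EV d → Matrix (Fin d) (Fin d) ℝ → ℝ) (v : EV d → ℝ) : Prop :=
  ∀ φ : EV d → ℝ, ContDiff ℝ 2 φ → ∀ x ∈ Ω,
    IsLocalMinOn (fun y => v y - φ y) Ω x → grad φ x ≠ 0 →
      0 ≤ F x (v x) (grad φ x) (hess φ x)

/-- Viscosity subsolution (all `C²` test functions). -/
def IsViscSubsolAll {d : ℕ} (Ω : Set (EV d))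
    (F : EV d → ℝ → EV d → Matrix (Fin d) (Fin d) ℝ → ℝ) (u : EV d → ℝ) : Prop :=
  ∀ φ : EV d → ℝ, ContDiff ℝ 2 φ → ∀ x ∈ Ω,
    IsLocalMaxOn (fun y => u y - φ y) Ω x →
      F x (u x) (grad φ x) (hess φ x) ≤ 0

/-- Viscosity supersolution (all `C²` test functions). -/
def IsViscSupersolAll {d : ℕ} (Ω : Set (EV d))
    (F : EV d → ℝ → EV d → Matrix (Fin d) (Fin d) ℝ → ℝ) (v : EV d → ℝ) : Prop :=
  ∀ φ : EV d → ℝ, ContDiff ℝ 2 φ → ∀ x ∈ Ω,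
    IsLocalMinOn (fun y => v y - φ y) Ω x →
      0 ≤ F x (v x) (grad φ x) (hess φ x)

/-- Locally Lipschitz on a set. -/
def LocLipschitzOn {α β : Type*} [PseudoMetricSpace α] [PseudoMetricSpace β]
    (f : α → β) (s : Set α) : Prop :=
  ∀ x ∈ s, ∃ K : NNReal, ∃ ε : ℝ, 0 < ε ∧ LipschitzOnWith K f (s ∩ Metric.ball x ε)

/-- Admissible controls: measurable, with `∑ i βᵢ(t)² ≤ 1`. -/
def Admissible {m : ℕ} (β : ℝ → Fin m → ℝ) : Prop :=
  (∀ i, Measurable fun t => β t i) ∧ ∀ t : ℝ, ∑ i, (β t i) ^ 2 ≤ 1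

/-- (Carathéodory) trajectory of the control system `y' = ∑ᵢ βᵢ Zᵢ(y)` on `[0, T]`. -/
def IsTrajOn {d m : ℕ} (Z : Fin m → EV d → EV d) (β : ℝ → Fin m → ℝ)
    (y : ℝ → EV d) (T : ℝ) : Prop :=
  ContinuousOn y (Icc 0 T) ∧
    ∀ t ∈ Icc 0 T, y t = y 0 + ∫ s in (0:ℝ)..t, ∑ i, β s i • Z i (y s)

/-- `x₁` is reachable from `x₀` by the control system, with trajectory staying in `Ω`. -/
def ReachableIn {d m : ℕ} (Ω : Set (EV d)) (Z : Fin m → EV d → EV d)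
    (x₀ x₁ : EV d) : Prop :=
  ∃ (β : ℝ → Fin m → ℝ) (y : ℝ → EV d) (T : ℝ), 0 ≤ T ∧ Admissible β ∧
    IsTrajOn Z β y T ∧ (∀ t ∈ Icc 0 T, y t ∈ Ω) ∧ y 0 = x₀ ∧ y T = x₁

/-- Bounded time controllability in `Ω`. -/
def BTC {d m : ℕ} (Ω : Set (EV d)) (Z : Fin m → EV d → EV d) : Prop :=
  ∀ x₀ ∈ Ω, ∀ x₁ ∈ Ω, ReachableIn Ω Z x₀ x₁

/-- Generalized exterior (Bony, proximal) normal `ν` to `K` at `z`. -/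
def IsExtNormal {d : ℕ} (K : Set (EV d)) (z ν : EV d) : Prop :=
  z ∈ frontier K ∧ ‖ν‖ = 1 ∧
    ∃ t : ℝ, 0 < t ∧ Metric.closedBall (z + t • ν) t ∩ closure K = {z}

/-- Lie bracket of two vector fields. -/
def vfBracket {d : ℕ} (X Y : EV d → EV d) : EV d → EV d :=
  fun x => fderiv ℝ Y x (X x) - fderiv ℝ X x (Y x)

/-- Vector fields obtained from `Z₁,…,Z_m` by iterated Lie brackets. -/
inductive LieGenerated {d m : ℕ} (Z : Fin m → EV d → EV d) : (EV d → EV d) → Prop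
  | base (i : Fin m) : LieGenerated Z (Z i)
  | bracket {X Y : EV d → EV d} :
      LieGenerated Z X → LieGenerated Z Y → LieGenerated Z (vfBracket X Y)

/-- Hörmander condition: the fields and their iterated brackets span `ℝ^d` at every point of `Ω`. -/
def Hormander {d m : ℕ} (Ω : Set (EV d)) (Z : Fin m → EV d → EV d) : Prop :=
  ∀ x ∈ Ω, Submodule.span ℝ {v : EV d | ∃ W, LieGenerated Z W ∧ W x = v} = ⊤

/-- Intrinsic (horizontal) gradient `σ(x)ᵀ p`. -/
def sigmaT {d m : ℕ} (σ : Fin m → EV d → EV d) (x : EV d) (p : EV d) : EV m :=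
  (EuclideanSpace.equiv (Fin m) ℝ).symm fun j => ∑ i, σ j x i * p i

/-- `σ(x)ᵀ X σ(x)` as an `m × m` matrix. -/
def sigmaHess {d m : ℕ} (σ : Fin m → EV d → EV d) (x : EV d)
    (X : Matrix (Fin d) (Fin d) ℝ) : Matrix (Fin m) (Fin m) ℝ :=
  Matrix.of fun j k => ∑ i, ∑ l, σ j x i * X i l * σ k x l

/-- First-order correction term `g(x,p)` of the symmetrized intrinsic Hessian. -/
def corrTerm {d m : ℕ} (σ : Fin m → EV d → EV d) (x : EV d) (p : EV d) :
    Matrix (Fin m) (Fin m) ℝ :=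
  Matrix.of fun j k =>
    ((∑ i, (fderiv ℝ (σ k) x (σ j x)) i * p i) +
      (∑ i, (fderiv ℝ (σ j) x (σ k x)) i * p i)) / 2

/-- Euclidean form `F(x,r,p,X) = G(x, r, σᵀp, σᵀXσ + g(x,p))` of a subelliptic operator. -/
def euclOp {d m : ℕ} (σ : Fin m → EV d → EV d)
    (G : EV d → ℝ → EV m → Matrix (Fin m) (Fin m) ℝ → ℝ) :
    EV d → ℝ → EV d → Matrix (Fin d) (Fin d) ℝ → ℝ :=
  fun x r p X => G x r (sigmaT σ x p) (sigmaHess σ x X + corrTerm σ x p)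

/-- `A ≥ Z ⊗ Z` in the quadratic-form sense: `ξᵀAξ ≥ (Z·ξ)²` for all `ξ`. -/
def matGEouter {d : ℕ} (A : Matrix (Fin d) (Fin d) ℝ) (Z : EV d) : Prop :=
  ∀ ξ : EV d, (dotp Z ξ) ^ 2 ≤ ∑ i, ∑ j, A i j * ξ i * ξ j

/-- Lemma 2.1: if `Z` is a generalized subunit vector for the linear
operator `F(x,X) = -Tr(A(x)X)`, then `rZ` is a Fefferman–Phong subunit vector of the
positive semidefinite matrix `A(x)` for some `r > 0`. -/
theorem generalized_subunit_gives_feffermanPhong {d : ℕ}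
    (A : Matrix (Fin d) (Fin d) ℝ) (hA : A.PosSemidef) (Z : EV d)
    (hZ : ∀ p : EV d, dotp Z p ≠ 0 →
      ∃ γ : ℝ, 0 < γ ∧ 0 < -A.trace + γ * ∑ i, ∑ j, A i j * p i * p j) :
    ∃ r : ℝ, 0 < r ∧ matGEouter A (r • Z) := by
  classical
  set B : (Fin d → ℝ) → (Fin d → ℝ) → ℝ := fun x y => ∑ i, ∑ j, A i j * x i * y j with hB
  have hsymA : ∀ i j, A i j = A j i := fun i j => by simpa using (hA.1.apply i j).symm
  have hBsymm : ∀ x y, B x y = B y x := by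
    intro x y
    rw [hB]; dsimp only
    rw [Finset.sum_comm]
    refine Finset.sum_congr rfl fun i _ => Finset.sum_congr rfl fun j _ => ?_
    rw [hsymA j i]; ring
  have hBpos : ∀ x : Fin d → ℝ, 0 ≤ B x x := by
    intro x
    have h := hA.dotProduct_mulVec_nonneg x
    simpa [hB, dotProduct, Matrix.mulVec, Finset.mul_sum, mul_comm, mul_left_comm,
      mul_assoc] using h
  -- bilinearity / expansion
  have hexp : ∀ (t : ℝ) (x y : Fin d → ℝ),
      B (x + t • y) (x + t • y) = B y y * (t * t) + 2 * B x y * t + B x x := by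
    intro t x y
    rw [hB]; dsimp only
    have : ∀ i j, A i j * (x + t • y) i * (x + t • y) j
        = A i j * x i * x j + (A i j * x i * y j) * t + (A i j * y i * x j) * t
          + (A i j * y i * y j) * (t * t) := by
      intro i j; simp only [Pi.add_apply, Pi.smul_apply, smul_eq_mul]; ring
    simp only [this, Finset.sum_add_distrib, ← Finset.sum_mul]
    have := hBsymm x y
    rw [hB] at this; dsimp only at this
    rw [show (∑ i, ∑ j, A i j * y i * x j) = ∑ i, ∑ j, A i j * x i * y j from by
      rw [← this]]
    ring
  -- Cauchy-Schwarz for the PSD bilinear form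
  have hCS : ∀ x y, (B x y) ^ 2 ≤ B x x * B y y := by
    intro x y
    have h := discrim_le_zero (a := B y y) (b := 2 * B x y) (c := B x x)
      (fun t => by rw [← hexp t x y]; exact hBpos _)
    rw [discrim] at h
    nlinarith [h]
  -- trace is nonnegative
  have htr : 0 ≤ A.trace := by
    rw [Matrix.trace]
    refine Finset.sum_nonneg fun i _ => ?_
    have h := hA.dotProduct_mulVec_nonneg (Pi.single i 1)
    simpa [dotProduct, Matrix.mulVec, Pi.single_apply] using h
  -- key positivity
  have hpos : ∀ p : EV d, dotp Z p ≠ 0 → 0 < B (fun i => p i) (fun i => p i) := by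
    intro p hp
    obtain ⟨γ, hγ, hlt⟩ := hZ p hp
    have : (∑ i, ∑ j, A i j * p i * p j) = B (fun i => p i) (fun i => p i) := rfl
    nlinarith [hlt, htr, hγ]
  -- Z lies in the range of toEuclideanLin A
  set T : EV d →ₗ[ℝ] EV d := Matrix.toEuclideanLin A with hT
  have hTapply : ∀ (v : EV d) (i : Fin d), T v i = ∑ j, A i j * v j := by
    intro v i
    rw [hT, Matrix.toEuclideanLin_apply]
    rfl
  have hZmem : Z ∈ LinearMap.range T := by
    rw [← Submodule.orthogonal_orthogonal (LinearMap.range T)]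
    rw [Submodule.mem_orthogonal]
    intro v hv
    have hTv : (inner ℝ (T v) v : ℝ) = 0 := hv (T v) (LinearMap.mem_range_self T v)
    have hBvv : B (fun i => v i) (fun i => v i) = 0 := by
      rw [← hTv, PiLp.inner_apply]
      simp only [RCLike.inner_apply, conj_trivial]
      rw [hB]; dsimp only
      refine (Finset.sum_congr rfl fun i _ => ?_)
      rw [hTapply v i, Finset.mul_sum]
      exact Finset.sum_congr rfl fun j _ => by ring
    have hdz : dotp Z v = 0 := by
      by_contra h
      exact absurd hBvv (ne_of_gt (hpos v h))
    rw [PiLp.inner_apply]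
    simp only [RCLike.inner_apply, conj_trivial]
    rw [dotp] at hdz
    rw [← hdz]
  obtain ⟨w, hw⟩ := hZmem
  have hZi : ∀ i, Z i = ∑ j, A i j * w j := by
    intro i; rw [← hw, hTapply]
  -- dot products through A
  have hdot : ∀ ξ : EV d, dotp Z ξ = B (fun i => ξ i) (fun i => w i) := by
    intro ξ
    rw [dotp, hB]; dsimp only
    refine Finset.sum_congr rfl fun i _ => ?_
    rw [hZi i, Finset.sum_mul]
    exact Finset.sum_congr rfl fun j _ => by ring
  set w' : Fin d → ℝ := fun i => w i with hw'
  have hQw : 0 ≤ B w' w' := hBpos w'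
  rcases eq_or_lt_of_le hQw with hzero | hposw
  · -- B w w = 0 : then dotp Z ξ = 0 always; r = 1 works
    refine ⟨1, one_pos, fun ξ => ?_⟩
    have h2 := hCS (fun i => ξ i) w'
    rw [← hzero] at h2
    have h3 : (B (fun i => ξ i) w') = 0 := by nlinarith [h2]
    simp only [one_smul]
    rw [hdot ξ, h3]
    simpa using hBpos (fun i => ξ i)
  · refine ⟨(Real.sqrt (B w' w'))⁻¹, by positivity, fun ξ => ?_⟩
    have hr : ((Real.sqrt (B w' w'))⁻¹) ^ 2 = (B w' w')⁻¹ := by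
      rw [← Real.sqrt_inv, Real.sq_sqrt (by positivity)]
    have hsA : (dotp ((Real.sqrt (B w' w'))⁻¹ • Z) ξ)
        = (Real.sqrt (B w' w'))⁻¹ * dotp Z ξ := by
      rw [dotp, dotp, Finset.mul_sum]
      exact Finset.sum_congr rfl fun i _ => by
        simp [mul_assoc]
    have hCS' := hCS (fun i => ξ i) w'
    have hgoal : (∑ i, ∑ j, A i j * ξ i * ξ j) = B (fun i => ξ i) (fun i => ξ i) := rfl
    rw [hsA, hgoal, mul_pow, hr, hdot ξ]
    rw [inv_mul_le_iff₀ hposw]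
    linarith [hCS']
end
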